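/- arXiv:1506.07331 — 3 statements merged into one kernel-verified Lean document; each statement's English description precedes it below -/
import Mathlib

section
/- Let K ≥ 1, ν ≥ 0, and let M be a K×K Hermitian negative definite matrix. For Hermitian G banded within diagonals [−ν, ν] with I+G positive definite, define I(G) := K + log det(I+G) + Tr(M(I+G)). Suppose G* is Hermitian, banded within diagonals [−ν, ν], with I+G* positive definite, and satisfies [(I+G*)⁻¹]_ν = −[M]_ν. Then (i) for every Hermitian G banded within [−ν, ν] with I+G positive definite, I(G) ≤ I(G*); and (ii) I(G*) = log det(I+G*). -/
open Matrix
open scoped ComplexOrder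

/-- `[A]_ν`: the matrix agreeing with `A` on the diagonals `|k − ℓ| ≤ ν` and zero elsewhere. -/
def bandPart {K : ℕ} (ν : ℕ) (A : Matrix (Fin K) (Fin K) ℂ) : Matrix (Fin K) (Fin K) ℂ :=
  Matrix.of fun k ℓ => if |((k : ℕ) : ℤ) - ((ℓ : ℕ) : ℤ)| ≤ (ν : ℤ) then A k ℓ else 0

/-- The objective `I(G) = K + log det(I+G) + Tr(M(I+G))` of Theorem 2. -/
noncomputable def Ifun {K : ℕ} (M G : Matrix (Fin K) (Fin K) ℂ) : ℝ :=
  K + (Complex.log ((1 + G).det)).re + (Matrix.trace (M * (1 + G))).re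

lemma logdet_le_trace {K : ℕ} {B : Matrix (Fin K) (Fin K) ℂ} (hB : B.PosDef) :
    Real.log (‖B.det‖) ≤ (Matrix.trace B).re - K := by
  have hH := hB.isHermitian
  have hev : ∀ i, 0 < hH.eigenvalues i := fun i => hB.eigenvalues_pos i
  have habs : ‖B.det‖ = ∏ i, hH.eigenvalues i := by
    rw [hH.det_eq_prod_eigenvalues, norm_prod]
    refine Finset.prod_congr rfl fun i _ => ?_
    exact (Complex.norm_real _).trans (Real.norm_of_nonneg (hev i).le)
  have hU : (star (hH.eigenvectorUnitary : Matrix (Fin K) (Fin K) ℂ)) *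
      (hH.eigenvectorUnitary : Matrix (Fin K) (Fin K) ℂ) = 1 := by
    exact_mod_cast Unitary.coe_star_mul_self hH.eigenvectorUnitary
  have htr : B.trace = ((∑ i, hH.eigenvalues i : ℝ) : ℂ) := by
    rw [hH.trace_eq_sum_eigenvalues]
    push_cast; rfl
  rw [habs, htr, Complex.ofReal_re,
    Real.log_prod (fun i _ => (hev i).ne')]
  have h1 : ∑ i, Real.log (hH.eigenvalues i) ≤ ∑ i, (hH.eigenvalues i - 1) :=
    Finset.sum_le_sum fun i _ => Real.log_le_sub_one_of_pos (hev i)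
  have h2 : ∑ i, (hH.eigenvalues i - 1) = (∑ i, hH.eigenvalues i) - K := by
    rw [Finset.sum_sub_distrib]; simp
  linarith

lemma conj_posDef {K : ℕ} {A S : Matrix (Fin K) (Fin K) ℂ} (hA : A.PosDef) (hS : IsUnit S) :
    (Sᴴ * A * S).PosDef := by
  exact hA.conjTranspose_mul_mul_same (Matrix.mulVec_injective_iff_isUnit.2 hS)

open scoped MatrixOrder in
lemma logdet_key {K : ℕ} {P Q : Matrix (Fin K) (Fin K) ℂ} (hP : P.PosDef) (hQ : Q.PosDef) :
    Real.log (‖Q.det‖) ≤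
      Real.log (‖P.det‖) + (Matrix.trace (P⁻¹ * Q)).re - K := by
  set S := CFC.sqrt Q with hSdef
  have hSH : S.IsHermitian := (CFC.sqrt_nonneg Q).posSemidef.isHermitian
  have hSS : S * S = Q := CFC.sqrt_mul_sqrt_self Q hQ.posSemidef.nonneg
  have hdetQ : Q.det ≠ 0 := hQ.det_pos.ne'
  have hdetP : P.det ≠ 0 := hP.det_pos.ne'
  have hdetS : S.det ≠ 0 := by
    intro h
    apply hdetQ
    rw [← hSS, det_mul, h, mul_zero]
  have hSunit : IsUnit S := (Matrix.isUnit_iff_isUnit_det S).2 hdetS.isUnit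
  have hBpd : (S * P⁻¹ * S).PosDef := by
    have := conj_posDef hP.inv hSunit
    rwa [hSH.eq] at this
  have htr : (S * P⁻¹ * S).trace = (P⁻¹ * Q).trace := by
    calc (S * P⁻¹ * S).trace = (S * (S * P⁻¹)).trace := trace_mul_comm _ _
      _ = (Q * P⁻¹).trace := by rw [← mul_assoc, hSS]
      _ = (P⁻¹ * Q).trace := trace_mul_comm _ _
  have hdetB : ‖(S * P⁻¹ * S).det‖ = ‖Q.det‖ * (‖P.det‖)⁻¹ := by
    have h1 : (S * P⁻¹ * S).det = Q.det * P.det⁻¹ := by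
      rw [det_mul, det_mul, Matrix.det_nonsing_inv, Ring.inverse_eq_inv', ← hSS, det_mul]
      ring
    rw [h1, norm_mul, norm_inv]
  have := logdet_le_trace hBpd
  rw [hdetB, htr, Real.log_mul (by simpa using hdetQ) (by simp [hdetP]), Real.log_inv] at this
  linarith

lemma trace_bandPart_mul {K ν : ℕ} (X A : Matrix (Fin K) (Fin K) ℂ)
    (hA : ∀ k ℓ : Fin K, |((k : ℕ) : ℤ) - ((ℓ : ℕ) : ℤ)| > (ν : ℤ) → A k ℓ = 0) :
    Matrix.trace (bandPart ν X * A) = Matrix.trace (X * A) := by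
  simp only [Matrix.trace, Matrix.diag, Matrix.mul_apply]
  refine Finset.sum_congr rfl fun k _ => Finset.sum_congr rfl fun ℓ _ => ?_
  by_cases h : |((k : ℕ) : ℤ) - ((ℓ : ℕ) : ℤ)| ≤ (ν : ℤ)
  · simp [bandPart, h]
  · have hz : A ℓ k = 0 := hA ℓ k (by rw [abs_sub_comm]; omega)
    simp [bandPart, h, hz]

lemma banded_one_add {K ν : ℕ} (G : Matrix (Fin K) (Fin K) ℂ)
    (hG : ∀ k ℓ : Fin K, |((k : ℕ) : ℤ) - ((ℓ : ℕ) : ℤ)| > (ν : ℤ) → G k ℓ = 0) :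
    ∀ k ℓ : Fin K, |((k : ℕ) : ℤ) - ((ℓ : ℕ) : ℤ)| > (ν : ℤ) → (1 + G) k ℓ = 0 := by
  intro k ℓ h
  have hk : k ≠ ℓ := by
    intro e; subst e; simp at h; omega
  rw [Matrix.add_apply, Matrix.one_apply_ne hk, hG k ℓ h, add_zero]

/-- Theorem 2 of the paper. For `M` Hermitian negative definite, the unique
banded Hermitian `G*` with `I+G*` positive definite satisfying `[(I+G*)⁻¹]_ν = −[M]_ν`
maximizes `I(G) = K + log det(I+G) + Tr(M(I+G))` over all banded Hermitian `G` with `I+G`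
positive definite, and `I(G*) = log det(I+G*)`. -/
theorem gmi_banded_max {K : ℕ} (hK : 1 ≤ K) (ν : ℕ)
    (M : Matrix (Fin K) (Fin K) ℂ) (hM : (-M).PosDef)
    (Gstar : Matrix (Fin K) (Fin K) ℂ) (hGh : Gstar.IsHermitian)
    (hGband : ∀ k ℓ : Fin K, |((k : ℕ) : ℤ) - ((ℓ : ℕ) : ℤ)| > (ν : ℤ) → Gstar k ℓ = 0)
    (hGpd : (1 + Gstar).PosDef)
    (hstat : bandPart ν (1 + Gstar)⁻¹ = -(bandPart ν M)) :
    (∀ G : Matrix (Fin K) (Fin K) ℂ, G.IsHermitian →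
        (∀ k ℓ : Fin K, |((k : ℕ) : ℤ) - ((ℓ : ℕ) : ℤ)| > (ν : ℤ) → G k ℓ = 0) →
        (1 + G).PosDef → Ifun M G ≤ Ifun M Gstar) ∧
      Ifun M Gstar = (Complex.log ((1 + Gstar).det)).re := by
  set P : Matrix (Fin K) (Fin K) ℂ := 1 + Gstar with hPdef
  have hbandM : bandPart ν M = -(bandPart ν P⁻¹) := by rw [hstat, neg_neg]
  -- trace identity for banded matrices A
  have htrM : ∀ A : Matrix (Fin K) (Fin K) ℂ,
      (∀ k ℓ : Fin K, |((k : ℕ) : ℤ) - ((ℓ : ℕ) : ℤ)| > (ν : ℤ) → A k ℓ = 0) →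
      Matrix.trace (M * A) = -Matrix.trace (P⁻¹ * A) := by
    intro A hA
    rw [← trace_bandPart_mul M A hA, hbandM, neg_mul, trace_neg,
      trace_bandPart_mul _ A hA]
  have hPinvP : P⁻¹ * P = 1 := Matrix.nonsing_inv_mul P hGpd.det_pos.ne'.isUnit
  have hIfun_star : Ifun M Gstar = (Complex.log ((1 + Gstar).det)).re := by
    have h1 : Matrix.trace (M * (1 + Gstar)) = -(K : ℂ) := by
      rw [htrM (1 + Gstar) (banded_one_add Gstar hGband), ← hPdef, hPinvP, trace_one]
      simp
    unfold Ifun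
    rw [h1]
    simp
  refine ⟨fun G hGh' hGband' hGpd' => ?_, hIfun_star⟩
  set Q : Matrix (Fin K) (Fin K) ℂ := 1 + G with hQdef
  have h1 : Matrix.trace (M * (1 + G)) = -Matrix.trace (P⁻¹ * Q) :=
    htrM (1 + G) (banded_one_add G hGband')
  have hkey := logdet_key hGpd hGpd'
  have hlogP : (Complex.log P.det).re = Real.log (‖P.det‖) := Complex.log_re _
  have hlogQ : (Complex.log Q.det).re = Real.log (‖Q.det‖) := Complex.log_re _
  rw [hIfun_star]
  unfold Ifun
  rw [h1, Complex.neg_re, ← hQdef, ← hPdef, hlogP, hlogQ]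
  linarith
end

section
/- Let H ∈ ℂ^{N×K}, N₀ > 0, P ∈ ℂ^{K×K} Hermitian, and set M := Hᴴ(N₀I + HHᴴ)⁻¹H − I and M̃ := P(I+M)P − P. Let G ∈ ℂ^{K×K} be Hermitian with I+G positive definite and R ∈ ℂ^{K×K} arbitrary, and set V_opt := (I + G + RP)Hᴴ(HHᴴ + N₀I)⁻¹. Then for every V ∈ ℂ^{K×N}, I_GMI(V,R,G) ≤ I_GMI(V_opt,R,G), and I_GMI(V_opt,R,G) = K + log det(I+G) + 2 Re Tr(PMR) + Tr(M(I+G)) + Tr((I+G)⁻¹ R M̃ Rᴴ). -/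
open Matrix
open scoped ComplexOrder

lemma trace_re_conjT {n : ℕ} (A : Matrix (Fin n) (Fin n) ℂ) :
    (Matrix.trace Aᴴ).re = (Matrix.trace A).re := by
  rw [Matrix.trace_conjTranspose]; simp

lemma psd_trace_re_nonneg {n : ℕ} {A : Matrix (Fin n) (Fin n) ℂ}
    (hA : A.PosSemidef) : 0 ≤ (Matrix.trace A).re := by
  have h : (0:ℂ) ≤ Matrix.trace A := by
    rw [Matrix.trace]
    refine Finset.sum_nonneg fun i _ => ?_
    exact hA.diag_nonneg
  exact (Complex.le_def.mp h).1

open scoped MatrixOrder in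
lemma pd_psd_trace_re_nonneg {n : ℕ} {Q C : Matrix (Fin n) (Fin n) ℂ}
    (hQ : Q.PosDef) (hC : C.PosSemidef) : 0 ≤ (Matrix.trace (Q * C)).re := by
  set s := CFC.sqrt Q with hs
  have hss : s * s = Q := CFC.sqrt_mul_sqrt_self Q hQ.posSemidef.nonneg
  have hsh : s.IsHermitian := (CFC.sqrt_nonneg Q).posSemidef.isHermitian
  have key : Matrix.trace (Q * C) = Matrix.trace (s * C * sᴴ) := by
    rw [hsh.eq, ← hss, Matrix.mul_assoc, Matrix.trace_mul_comm s (s * C), Matrix.mul_assoc]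
  rw [key]
  exact psd_trace_re_nonneg (hC.mul_mul_conjTranspose_same s)

lemma swap_re {k n : ℕ} {Q : Matrix (Fin k) (Fin k) ℂ} (hQ : Q.IsHermitian)
    (A : Matrix (Fin k) (Fin n) ℂ) (B : Matrix (Fin n) (Fin k) ℂ) :
    (Matrix.trace (Q * (A * B))).re = (Matrix.trace (Q * (Bᴴ * Aᴴ))).re := by
  have h : (Q * (A * B))ᴴ = (Bᴴ * Aᴴ) * Q := by
    simp [conjTranspose_mul, hQ.eq, Matrix.mul_assoc]
  calc (Matrix.trace (Q * (A * B))).re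
      = (Matrix.trace ((Q * (A * B))ᴴ)).re := (trace_re_conjT _).symm
    _ = (Matrix.trace ((Bᴴ * Aᴴ) * Q)).re := by rw [h]
    _ = (Matrix.trace (Q * (Bᴴ * Aᴴ))).re := by rw [trace_mul_comm]


/-- The GMI of the channel-shortening demodulator with parameters `(V, R, G)`. -/
noncomputable def IGMI {N K : ℕ} (H : Matrix (Fin N) (Fin K) ℂ) (N₀ : ℝ)
    (P : Matrix (Fin K) (Fin K) ℂ) (V : Matrix (Fin K) (Fin N) ℂ)
    (R G : Matrix (Fin K) (Fin K) ℂ) : ℝ :=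
  (Complex.log ((1 + G).det)).re - (Matrix.trace G).re
    + 2 * (Matrix.trace (V * H - R * P)).re
    - (Matrix.trace ((1 + G)⁻¹ * (V * ((N₀ : ℂ) • 1 + H * Hᴴ) * Vᴴ - V * H * P * Rᴴ
        - R * P * Hᴴ * Vᴴ + R * P * Rᴴ))).re

/-- front-end-filter part of Proposition 3, Method II. The GMI is
maximized over `V` by `V_opt = (I + G + RP)Hᴴ(HHᴴ + N₀I)⁻¹`, with optimal value
`K + log det(I+G) + 2 Re Tr(PMR) + Tr(M(I+G)) + Tr((I+G)⁻¹ R M̃ Rᴴ)`. -/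
theorem gmi_method2_frontend {N K : ℕ} (H : Matrix (Fin N) (Fin K) ℂ)
    (N₀ : ℝ) (hN₀ : 0 < N₀)
    (P : Matrix (Fin K) (Fin K) ℂ) (hP : P.IsHermitian)
    (M : Matrix (Fin K) (Fin K) ℂ)
    (hM : M = Hᴴ * ((N₀ : ℂ) • 1 + H * Hᴴ)⁻¹ * H - 1)
    (Mt : Matrix (Fin K) (Fin K) ℂ) (hMt : Mt = P * (1 + M) * P - P)
    (G : Matrix (Fin K) (Fin K) ℂ) (hG : G.IsHermitian) (hpd : (1 + G).PosDef)
    (R : Matrix (Fin K) (Fin K) ℂ)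
    (Vopt : Matrix (Fin K) (Fin N) ℂ)
    (hVopt : Vopt = (1 + G + R * P) * Hᴴ * (H * Hᴴ + (N₀ : ℂ) • 1)⁻¹) :
    (∀ V : Matrix (Fin K) (Fin N) ℂ, IGMI H N₀ P V R G ≤ IGMI H N₀ P Vopt R G) ∧
      IGMI H N₀ P Vopt R G
        = K + (Complex.log ((1 + G).det)).re + 2 * (Matrix.trace (P * M * R)).re
          + (Matrix.trace (M * (1 + G))).re
          + (Matrix.trace ((1 + G)⁻¹ * R * Mt * Rᴴ)).re := by
  -- setup
  set S : Matrix (Fin N) (Fin N) ℂ := (N₀ : ℂ) • 1 + H * Hᴴ with hSdef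
  have hSpd : S.PosDef := by
    have h1 : Matrix.PosDef ((N₀ : ℂ) • (1 : Matrix (Fin N) (Fin N) ℂ)) := by
      rw [Matrix.smul_one_eq_diagonal]
      exact Matrix.PosDef.diagonal fun i => Complex.zero_lt_real.mpr hN₀
    exact h1.add_posSemidef (Matrix.posSemidef_self_mul_conjTranspose H)
  have hSH : S.IsHermitian := hSpd.isHermitian
  have hSiH : S⁻¹.IsHermitian := hSH.inv
  have hSinv : S⁻¹ * S = 1 :=
    Matrix.nonsing_inv_mul S ((Matrix.isUnit_iff_isUnit_det S).mp hSpd.isUnit)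
  have hQinv : (1 + G)⁻¹ * (1 + G) = 1 :=
    Matrix.nonsing_inv_mul _ ((Matrix.isUnit_iff_isUnit_det _).mp hpd.isUnit)
  have hQiH : (1 + G)⁻¹.IsHermitian := hpd.isHermitian.inv
  have hV : Vopt = (1 + G + R * P) * Hᴴ * S⁻¹ := by
    have h : H * Hᴴ + (N₀ : ℂ) • 1 = S := by rw [hSdef, add_comm]
    rw [hVopt, h]
  set Wm : Matrix (Fin K) (Fin K) ℂ := Hᴴ * S⁻¹ * H with hWm
  have hMW : 1 + M = Wm := by rw [hM]; exact add_sub_cancel 1 Wm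
  -- key products
  have hVoptH : Vopt * H = (1 + G + R * P) * Wm := by
    rw [hV, hWm]; simp [Matrix.mul_assoc]
  have hVoptS : Vopt * S = (1 + G + R * P) * Hᴴ := by
    rw [hV]; simp [Matrix.mul_assoc, hSinv]
  have hVoptT : Voptᴴ = S⁻¹ * (H * (1 + G + P * Rᴴ)) := by
    rw [hV]
    simp [conjTranspose_mul, conjTranspose_add, hP.eq, hG.eq, hSiH.eq, Matrix.mul_assoc,
      Matrix.mul_add, Matrix.add_mul]
  have hB : Vopt * S * Voptᴴ - Vopt * H * P * Rᴴ - R * P * Hᴴ * Voptᴴ + R * P * Rᴴ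
      = (1 + G) * Wm * (1 + G) + (R * P * Rᴴ - R * (P * Wm * P) * Rᴴ) := by
    have e1 : Vopt * S * Voptᴴ = (1 + G + R * P) * Wm * (1 + G + P * Rᴴ) := by
      rw [hVoptS, hVoptT, hWm]; simp [Matrix.mul_assoc]
    have e2 : Vopt * H * P * Rᴴ = (1 + G + R * P) * Wm * (P * Rᴴ) := by
      rw [hVoptH]; simp [Matrix.mul_assoc]
    have e3 : R * P * Hᴴ * Voptᴴ = (R * P) * Wm * (1 + G + P * Rᴴ) := by
      rw [hVoptT, hWm]; simp [Matrix.mul_assoc]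
    rw [e1, e2, e3]
    noncomm_ring
  have hBMt : (1 + G) * Wm * (1 + G) + (R * P * Rᴴ - R * (P * Wm * P) * Rᴴ)
      = (1 + G) * Wm * (1 + G) - R * Mt * Rᴴ := by
    rw [hMt, hMW]; noncomm_ring
  -- trace computations (complex level)
  have h2 : Matrix.trace (Vopt * H - R * P)
      = (K : ℂ) + Matrix.trace G + Matrix.trace (M * (1 + G)) + Matrix.trace (P * M * R) := by
    have expand : (1 + G + R * P) * Wm
        = 1 + G + M + G * M + R * P + R * (P * M) := by
      rw [← hMW]; noncomm_ring
    rw [Matrix.trace_sub, hVoptH, expand]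
    simp only [Matrix.trace_add, Matrix.trace_one, Fintype.card_fin]
    have c1 : Matrix.trace (G * M) = Matrix.trace (M * G) := trace_mul_comm G M
    have c2 : Matrix.trace (R * (P * M)) = Matrix.trace (P * M * R) :=
      trace_mul_comm R (P * M)
    have c3 : Matrix.trace (M * (1 + G)) = Matrix.trace M + Matrix.trace (M * G) := by
      rw [Matrix.mul_add, mul_one, Matrix.trace_add]
    rw [c1, c2, c3]; ring
  have h3 : Matrix.trace ((1 + G)⁻¹ * ((1 + G) * Wm * (1 + G) - R * Mt * Rᴴ))
      = (K : ℂ) + Matrix.trace G + Matrix.trace (M * (1 + G))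
        - Matrix.trace ((1 + G)⁻¹ * R * Mt * Rᴴ) := by
    have e : (1 + G)⁻¹ * ((1 + G) * Wm * (1 + G)) = Wm * (1 + G) := by
      rw [← Matrix.mul_assoc, ← Matrix.mul_assoc, hQinv, one_mul]
    rw [Matrix.mul_sub, Matrix.trace_sub, e]
    have e2 : Matrix.trace (Wm * (1 + G))
        = (K : ℂ) + Matrix.trace G + Matrix.trace (M * (1 + G)) := by
      rw [← hMW, Matrix.add_mul, one_mul, Matrix.trace_add, Matrix.trace_add,
        Matrix.mul_add, mul_one, Matrix.trace_add, Matrix.trace_one, Fintype.card_fin]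
    rw [e2]
    rw [Matrix.mul_assoc, Matrix.mul_assoc, Matrix.mul_assoc]
  have hkey2 : (1 + G)⁻¹ * (Vopt * S) = Hᴴ + (1 + G)⁻¹ * (R * (P * Hᴴ)) := by
    rw [hVoptS, Matrix.add_mul, Matrix.mul_add, ← Matrix.mul_assoc, hQinv, Matrix.one_mul]
    simp only [Matrix.mul_assoc]
  have cW : ∀ W : Matrix (Fin K) (Fin N) ℂ,
      Matrix.trace ((1 + G)⁻¹ * (Vopt * (S * Wᴴ)))
        = Matrix.trace (Hᴴ * Wᴴ) + Matrix.trace ((1 + G)⁻¹ * (R * (P * (Hᴴ * Wᴴ)))) := by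
    intro W
    have h1 : (1 + G)⁻¹ * (Vopt * (S * Wᴴ)) = ((1 + G)⁻¹ * (Vopt * S)) * Wᴴ := by
      simp only [Matrix.mul_assoc]
    rw [h1, hkey2, Matrix.add_mul, Matrix.trace_add]
    simp only [Matrix.mul_assoc]
  have hsw1 : ∀ W : Matrix (Fin K) (Fin N) ℂ,
      (Matrix.trace ((1 + G)⁻¹ * (W * (H * (P * Rᴴ))))).re
        = (Matrix.trace ((1 + G)⁻¹ * (R * (P * (Hᴴ * Wᴴ))))).re := by
    intro W
    have h := swap_re hQiH W (H * (P * Rᴴ))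
    simpa only [conjTranspose_mul, conjTranspose_conjTranspose, hP.eq,
      Matrix.mul_assoc] using h
  have hsw3 : ∀ W : Matrix (Fin K) (Fin N) ℂ,
      (Matrix.trace (W * H)).re = (Matrix.trace (Hᴴ * Wᴴ)).re := by
    intro W
    have h := trace_re_conjT (W * H)
    rw [conjTranspose_mul] at h
    exact h.symm
  constructor
  · intro V
    have hpos : 0 ≤ (Matrix.trace ((1 + G)⁻¹ * ((V - Vopt) * S * (V - Vopt)ᴴ))).re := by
      have hC : ((V - Vopt) * S * (V - Vopt)ᴴ).PosSemidef :=
        hSpd.posSemidef.mul_mul_conjTranspose_same (V - Vopt)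
      exact pd_psd_trace_re_nonneg hpd.inv hC
    have hsw2 : (Matrix.trace ((1 + G)⁻¹ * (V * (S * Voptᴴ)))).re
        = (Matrix.trace ((1 + G)⁻¹ * (Vopt * (S * Vᴴ)))).re := by
      have h := swap_re hQiH V (S * Voptᴴ)
      simpa only [conjTranspose_mul, conjTranspose_conjTranspose, hSH.eq,
        Matrix.mul_assoc] using h
    have key : IGMI H N₀ P V R G
        = IGMI H N₀ P Vopt R G
          - (Matrix.trace ((1 + G)⁻¹ * ((V - Vopt) * S * (V - Vopt)ᴴ))).re := by
      rw [IGMI, IGMI, ← hSdef]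
      have e1 := congrArg Complex.re (cW V)
      have e2 := congrArg Complex.re (cW Vopt)
      simp only [Complex.add_re] at e1 e2
      simp only [conjTranspose_sub, Matrix.mul_sub, Matrix.sub_mul, Matrix.mul_add,
        Matrix.add_mul, Matrix.trace_sub, Matrix.trace_add, Matrix.mul_assoc,
        Complex.sub_re, Complex.add_re]
      linarith [e1, e2, hsw1 V, hsw1 Vopt, hsw2, hsw3 V, hsw3 Vopt]
    rw [key]
    linarith
  · -- value at Vopt
    rw [IGMI, ← hSdef, hB, hBMt]
    have h2re := congrArg Complex.re h2
    have h3re := congrArg Complex.re h3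
    simp only [Complex.add_re, Complex.sub_re, Complex.natCast_re] at h2re h3re
    rw [h2re, h3re]
    ring
end

section
/- Let K ≥ 1, let Q ∈ ℂ^{K×K} be Hermitian positive definite, M̃ ∈ ℂ^{K×K} Hermitian negative definite, and A ∈ ℂ^{K×K} arbitrary. Let 𝒮 ⊆ {0,…,K−1}² and define, for R ∈ ℂ^{K×K}, g(R) := 2 Re Tr(Aᴴ R) + Tr(Q R M̃ Rᴴ). Suppose R* vanishes at every position outside 𝒮 and the matrix Q R* M̃ + A vanishes at every position inside 𝒮. Then for every R ∈ ℂ^{K×K} vanishing at every position outside 𝒮, g(R) ≤ g(R*). -/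
open Matrix
open scoped ComplexOrder

lemma aux_diag_re_nonneg {n : ℕ} {P : Matrix (Fin n) (Fin n) ℂ} (hP : P.PosSemidef)
    (i : Fin n) : 0 ≤ (P i i).re := by
  have h := hP.re_dotProduct_nonneg (Pi.single i 1)
  simpa [dotProduct, mulVec, Pi.single_apply, Finset.mul_sum, apply_ite] using h

lemma aux_trace_re_nonneg {n : ℕ} {P : Matrix (Fin n) (Fin n) ℂ} (hP : P.PosSemidef) :
    0 ≤ (Matrix.trace P).re := by
  rw [Matrix.trace]
  rw [Complex.re_sum]
  exact Finset.sum_nonneg fun i _ => aux_diag_re_nonneg hP i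

open scoped MatrixOrder in
lemma aux_re_trace_mul_nonneg {n : ℕ} {Q N : Matrix (Fin n) (Fin n) ℂ}
    (hQ : Q.PosSemidef) (hN : N.PosSemidef) : 0 ≤ (Matrix.trace (Q * N)).re := by
  have hQ0 : 0 ≤ Q := Matrix.nonneg_iff_posSemidef.mpr hQ
  have h1 : Q = CFC.sqrt Q * CFC.sqrt Q := (CFC.sqrt_mul_sqrt_self Q hQ0).symm
  have h2 : Matrix.trace (Q * N) = Matrix.trace (CFC.sqrt Q * N * CFC.sqrt Q) := by
    conv_lhs => rw [h1]
    rw [Matrix.mul_assoc, Matrix.trace_mul_comm, Matrix.mul_assoc]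
  rw [h2]
  have : (CFC.sqrt Q * N * CFC.sqrt Q).PosSemidef := by
    have := hN.mul_mul_conjTranspose_same (CFC.sqrt Q)
    rwa [(CFC.sqrt_nonneg Q).posSemidef.isHermitian.eq] at this
  exact aux_trace_re_nonneg this

/-- interference-cancelation part of Proposition 3, Method II. Let `Q` be
Hermitian positive definite, `M̃` Hermitian negative definite, `A` arbitrary, and
`g(R) = 2 Re Tr(Aᴴ R) + Tr(Q R M̃ Rᴴ)`. If `R*` is supported on `𝒮` and `Q R* M̃ + A`
vanishes on `𝒮`, then `R*` maximizes `g` over matrices supported on `𝒮`. -/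
theorem method2_ic_max {K : ℕ} (hK : 1 ≤ K)
    (Q Mt A : Matrix (Fin K) (Fin K) ℂ)
    (hQ : Q.PosDef) (hMt : (-Mt).PosDef)
    (S : Set (Fin K × Fin K))
    (Rstar : Matrix (Fin K) (Fin K) ℂ)
    (hsupp : ∀ k ℓ : Fin K, (k, ℓ) ∉ S → Rstar k ℓ = 0)
    (hstat : ∀ k ℓ : Fin K, (k, ℓ) ∈ S → (Q * Rstar * Mt + A) k ℓ = 0) :
    ∀ R : Matrix (Fin K) (Fin K) ℂ, (∀ k ℓ : Fin K, (k, ℓ) ∉ S → R k ℓ = 0) →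
      2 * (Matrix.trace (Aᴴ * R)).re + (Matrix.trace (Q * R * Mt * Rᴴ)).re
        ≤ 2 * (Matrix.trace (Aᴴ * Rstar)).re
          + (Matrix.trace (Q * Rstar * Mt * Rstarᴴ)).re := by
  intro R hR
  have hQh : Qᴴ = Q := hQ.isHermitian.eq
  have hMth : Mtᴴ = Mt := by
    have := hMt.isHermitian.eq
    rw [conjTranspose_neg] at this
    exact neg_injective this
  set D : Matrix (Fin K) (Fin K) ℂ := R - Rstar with hD
  have hRdef : R = Rstar + D := by rw [hD]; abel
  -- key orthogonality
  have hkey : Matrix.trace ((Q * Rstar * Mt + A)ᴴ * D) = 0 := by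
    rw [Matrix.trace]
    apply Finset.sum_eq_zero
    intro ℓ _
    rw [Matrix.diag_apply, Matrix.mul_apply]
    apply Finset.sum_eq_zero
    intro k _
    by_cases h : (k, ℓ) ∈ S
    · rw [Matrix.conjTranspose_apply, hstat k ℓ h]; simp
    · have hDz : D k ℓ = 0 := by
        rw [hD, Matrix.sub_apply, hR k ℓ h, hsupp k ℓ h, sub_zero]
      rw [hDz, mul_zero]
  set ta := Matrix.trace (Aᴴ * D) with hta
  set t2 := Matrix.trace (Q * D * Mt * Rstarᴴ) with ht2
  set t1 := Matrix.trace (Q * Rstar * Mt * Dᴴ) with ht1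
  have ht2a : t2 = -ta := by
    have hexp : (Q * Rstar * Mt + A)ᴴ * D = Mt * Rstarᴴ * Q * D + Aᴴ * D := by
      rw [conjTranspose_add, conjTranspose_mul, conjTranspose_mul, hQh, hMth]
      noncomm_ring
    have := hkey
    rw [hexp, Matrix.trace_add] at this
    have hcyc : Matrix.trace (Mt * Rstarᴴ * Q * D) = t2 := by
      rw [ht2, show Mt * Rstarᴴ * Q * D = (Mt * Rstarᴴ) * (Q * D) from by noncomm_ring,
        Matrix.trace_mul_comm,
        show Q * D * (Mt * Rstarᴴ) = Q * D * Mt * Rstarᴴ from by noncomm_ring]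
    rw [hcyc, ← hta] at this
    linear_combination this
  have ht12 : t1 = star t2 := by
    rw [ht1, ht2, ← Matrix.trace_conjTranspose,
      show Q * Rstar * Mt * Dᴴ = Q * (Rstar * Mt * Dᴴ) from by noncomm_ring,
      Matrix.trace_mul_comm]
    congr 1
    simp only [conjTranspose_mul, conjTranspose_conjTranspose, hQh, hMth]
    noncomm_ring
  -- expansion of the quadratic term
  have hexp2 : Matrix.trace (Q * R * Mt * Rᴴ)
      = Matrix.trace (Q * Rstar * Mt * Rstarᴴ) + t1 + t2 + Matrix.trace (Q * D * Mt * Dᴴ) := by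
    rw [hRdef, ht1, ht2]
    rw [show Q * (Rstar + D) * Mt * (Rstar + D)ᴴ
        = Q * Rstar * Mt * Rstarᴴ + Q * Rstar * Mt * Dᴴ + Q * D * Mt * Rstarᴴ
          + Q * D * Mt * Dᴴ from by rw [conjTranspose_add]; noncomm_ring,
      Matrix.trace_add, Matrix.trace_add, Matrix.trace_add]
  have hlin : Matrix.trace (Aᴴ * R) = Matrix.trace (Aᴴ * Rstar) + ta := by
    rw [hRdef, Matrix.mul_add, Matrix.trace_add, hta]
  -- negativity of the second-order term
  have hneg : (Matrix.trace (Q * D * Mt * Dᴴ)).re ≤ 0 := by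
    have hps : (D * -Mt * Dᴴ).PosSemidef := hMt.posSemidef.mul_mul_conjTranspose_same D
    have h0 : 0 ≤ (Matrix.trace (Q * (D * -Mt * Dᴴ))).re :=
      aux_re_trace_mul_nonneg hQ.posSemidef hps
    have heq : Q * (D * -Mt * Dᴴ) = -(Q * D * Mt * Dᴴ) := by noncomm_ring
    rw [heq, Matrix.trace_neg, Complex.neg_re] at h0
    linarith
  have hre : t1.re + t2.re = -2 * ta.re := by
    have : t1.re = t2.re := by rw [ht12]; exact (Complex.conj_re t2)
    rw [this, ht2a]
    simp [Complex.neg_re]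
    ring
  rw [hexp2, hlin]
  simp only [Complex.add_re]
  linarith
end
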